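/- arXiv:2510.25869 — 2 statements merged into one kernel-verified Lean document; each statement's English description precedes it below -/
import Mathlib

section
/- For any discrete random variable X taking values in ℤ with finite variance, sup_x P(X = x) ≥ 1/√(1 + 12 Var(X)). -/
set_option maxHeartbeats 1000000

open MeasureTheory ProbabilityTheory

lemma sum_sq_icc (k : ℕ) (θ : ℝ) :
    ∑ j ∈ Finset.Icc (-(k:ℤ)) k, ((j:ℝ) - θ)^2
      = (2*k+1)*θ^2 + (k:ℝ)*(k+1)*(2*k+1)/3 := by
  induction k with
  | zero => norm_num
  | succ k ih =>
    have h : Finset.Icc (-(k+1:ℕ):ℤ) (k+1:ℕ)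
        = insert (-(k+1:ℕ):ℤ) (insert ((k+1:ℕ):ℤ) (Finset.Icc (-(k:ℤ)) k)) := by
      ext x; simp only [Finset.mem_Icc, Finset.mem_insert]; push_cast; omega
    rw [h, Finset.sum_insert, Finset.sum_insert, ih] <;>
      [skip; simp only [Finset.mem_Icc]; simp only [Finset.mem_insert, Finset.mem_Icc]]
    · push_cast; ring
    · push_cast; omega
    · push_cast; omega

lemma bump_hasSum (a θ T : ℝ) (c : ℤ) (k : ℕ) (hc : (c:ℝ) = a - θ) (hθ : |θ| ≤ 1/2)
    (hT1 : ((k:ℝ)+|θ|)^2 ≤ T) (hT2 : T ≤ ((k:ℝ)+1-|θ|)^2) :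
    HasSum (fun x : ℤ => max (T - ((x:ℝ)-a)^2) 0)
      ((2*k+1)*T - ((2*k+1)*θ^2 + (k:ℝ)*(k+1)*(2*k+1)/3)) := by
  have hkey : ∀ x : ℤ, ((x:ℝ) - a) = ((x - c : ℤ) : ℝ) - θ := by
    intro x; push_cast; rw [hc]; ring
  have hsupp : ∀ x : ℤ, x ∉ Finset.Icc (c - k) (c + k) →
      max (T - ((x:ℝ)-a)^2) 0 = 0 := by
    intro x hx
    simp only [Finset.mem_Icc, not_and_or, not_le] at hx
    have hd : ((k:ℝ)+1) ≤ |((x - c : ℤ) : ℝ)| := by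
      rw [← Int.cast_abs]
      have : (k:ℤ) + 1 ≤ |x - c| := by
        rcases abs_cases (x - c) with ⟨h1,_⟩|⟨h1,_⟩ <;> rw [h1] <;> omega
      exact_mod_cast this
    have h1 : (k:ℝ) + 1 - |θ| ≤ |(x:ℝ) - a| := by
      rw [hkey x]
      calc (k:ℝ) + 1 - |θ| ≤ |((x - c : ℤ) : ℝ)| - |θ| := by linarith
        _ ≤ |((x - c : ℤ) : ℝ) - θ| := abs_sub_abs_le_abs_sub _ _
    have h2 : ((k:ℝ) + 1 - |θ|)^2 ≤ ((x:ℝ) - a)^2 := by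
      rw [← sq_abs ((x:ℝ) - a)]
      exact pow_le_pow_left₀ (by linarith [abs_nonneg θ]) h1 2
    exact max_eq_right (by linarith)
  have hval : ∀ x : ℤ, x ∈ Finset.Icc (c - k) (c + k) →
      max (T - ((x:ℝ)-a)^2) 0 = T - ((x:ℝ)-a)^2 := by
    intro x hx
    simp only [Finset.mem_Icc] at hx
    have hd : |((x - c : ℤ) : ℝ)| ≤ (k:ℝ) := by
      rw [← Int.cast_abs]
      have : |x - c| ≤ (k:ℤ) := by
        rcases abs_cases (x - c) with ⟨h1,_⟩|⟨h1,_⟩ <;> rw [h1] <;> omega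
      exact_mod_cast this
    have h1 : |(x:ℝ) - a| ≤ (k:ℝ) + |θ| := by
      rw [hkey x]
      calc |((x - c : ℤ) : ℝ) - θ| ≤ |((x - c : ℤ) : ℝ)| + |θ| := abs_sub _ _
        _ ≤ (k:ℝ) + |θ| := by linarith
    have h2 : ((x:ℝ) - a)^2 ≤ ((k:ℝ)+|θ|)^2 := by
      rw [← sq_abs ((x:ℝ) - a)]
      exact pow_le_pow_left₀ (abs_nonneg _) h1 2
    exact max_eq_left (by linarith)
  have hsum := hasSum_sum_of_ne_finset_zero (L := SummationFilter.unconditional ℤ) (s := Finset.Icc (c - k) (c + k)) hsupp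
  convert hsum using 1
  rw [Finset.sum_congr rfl hval]
  have hmap : Finset.Icc (c - (k:ℤ)) (c + k)
      = (Finset.Icc (-(k:ℤ)) k).map (addLeftEmbedding c) := by
    rw [Finset.map_add_left_Icc]
    congr 1 <;> ring
  rw [hmap, Finset.sum_map]
  have : ∀ j ∈ Finset.Icc (-(k:ℤ)) k,
      T - (((addLeftEmbedding c j : ℤ) : ℝ) - a)^2 = T - (((j:ℤ):ℝ) - θ)^2 := by
    intro j _
    congr 2
    simp only [addLeftEmbedding_apply]
    push_cast; rw [hc]; ring
  rw [Finset.sum_congr rfl this, Finset.sum_sub_distrib, sum_sq_icc, Finset.sum_const,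
    Int.card_Icc]
  have h2 : (((k:ℤ) + 1 - -(k:ℤ)).toNat) = 2*k+1 := by omega
  rw [h2]
  simp only [nsmul_eq_mul]
  push_cast
  ring

lemma key_numeric (M V θ : ℝ) (hM0 : 0 < M) (hM1 : M ≤ 1) (hθ : |θ| ≤ 1/2)
    (hV : ∀ (k : ℕ) (T : ℝ), ((k:ℝ)+|θ|)^2 ≤ T → T ≤ ((k:ℝ)+1-|θ|)^2 →
      T - M * ((2*k+1)*T - ((2*k+1)*θ^2 + (k:ℝ)*(k+1)*(2*k+1)/3)) ≤ V) :
    (1/M^2 - 1)/12 ≤ V := by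
  set m : ℝ := 1/M with hm
  have hm0 : 0 < m := by positivity
  have hm1 : 1 ≤ m := one_le_one_div hM0 hM1
  have hMm : m * M = 1 := one_div_mul_cancel hM0.ne'
  set t : ℝ := |θ| with htdef
  have ht0 : 0 ≤ t := abs_nonneg θ
  have ht : t ≤ 1/2 := hθ
  have ht2 : t^2 = θ^2 := sq_abs θ
  set n : ℕ := ⌊m⌋₊ with hn
  have hn1 : 1 ≤ n := Nat.le_floor (by exact_mod_cast hm1)
  have hnm : (n:ℝ) ≤ m := Nat.floor_le hm0.le
  have hmn : m < (n:ℝ) + 1 := Nat.lt_floor_add_one m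
  have main : m * ((m^2-1)/12) ≤ m * V := by
    rcases Nat.even_or_odd n with ⟨k, hk⟩ | ⟨k, hk⟩
    · -- even case, n = k + k, T = (k+t)^2
      have hk1 : 1 ≤ k := by omega
      have hk1' : (1:ℝ) ≤ (k:ℝ) := by exact_mod_cast hk1
      have hA : 2*(k:ℝ) ≤ m := by
        have : ((n:ℕ):ℝ) = 2*(k:ℝ) := by rw [hk]; push_cast; ring
        linarith [this ▸ hnm]
      have hB : m ≤ 2*(k:ℝ) + 1 := by
        have : ((n:ℕ):ℝ) = 2*(k:ℝ) := by rw [hk]; push_cast; ring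
        linarith [this ▸ hmn]
      have h1 := hV k (((k:ℝ)+t)^2) le_rfl (by nlinarith)
      set S : ℝ := (2*(k:ℝ)+1)*(((k:ℝ)+t)^2) - ((2*(k:ℝ)+1)*θ^2 + (k:ℝ)*((k:ℝ)+1)*(2*(k:ℝ)+1)/3) with hS
      have h2 : m * (((k:ℝ)+t)^2 - M * S) ≤ m * V :=
        mul_le_mul_of_nonneg_left h1 hm0.le
      have h3 : m * (((k:ℝ)+t)^2 - M * S) = m * ((k:ℝ)+t)^2 - S := by
        calc m * (((k:ℝ)+t)^2 - M * S) = m * ((k:ℝ)+t)^2 - (m*M) * S := by ring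
          _ = m * ((k:ℝ)+t)^2 - S := by rw [hMm, one_mul]
      rw [h3] at h2
      refine le_trans ?_ h2
      rw [hS, ← ht2]
      nlinarith [mul_nonneg (mul_nonneg (sub_nonneg.mpr hA) (sub_nonneg.mpr hB))
          (by linarith : (0:ℝ) ≤ m + 4*(k:ℝ) + 1),
        mul_nonneg (sub_nonneg.mpr hB)
          (mul_nonneg (by linarith : (0:ℝ) ≤ 2*(k:ℝ)) (sq_nonneg (t - 1/2))),
        mul_nonneg (sub_nonneg.mpr hA)
          (mul_nonneg (by linarith : (0:ℝ) ≤ 2*(k:ℝ)+1) (sq_nonneg t))]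
    · -- odd case, n = 2k+1, T = (k+1-t)^2
      have hk0 : (0:ℝ) ≤ (k:ℝ) := Nat.cast_nonneg k
      have hA : 2*(k:ℝ) + 1 ≤ m := by
        have : ((n:ℕ):ℝ) = 2*(k:ℝ)+1 := by rw [hk]; push_cast; ring
        linarith [this ▸ hnm]
      have hB : m ≤ 2*(k:ℝ) + 2 := by
        have : ((n:ℕ):ℝ) = 2*(k:ℝ)+1 := by rw [hk]; push_cast; ring
        linarith [this ▸ hmn]
      have h1 := hV k (((k:ℝ)+1-t)^2) (by nlinarith) le_rfl
      set S : ℝ := (2*(k:ℝ)+1)*(((k:ℝ)+1-t)^2) - ((2*(k:ℝ)+1)*θ^2 + (k:ℝ)*((k:ℝ)+1)*(2*(k:ℝ)+1)/3) with hS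
      have h2 : m * (((k:ℝ)+1-t)^2 - M * S) ≤ m * V :=
        mul_le_mul_of_nonneg_left h1 hm0.le
      have h3 : m * (((k:ℝ)+1-t)^2 - M * S) = m * ((k:ℝ)+1-t)^2 - S := by
        calc m * (((k:ℝ)+1-t)^2 - M * S) = m * ((k:ℝ)+1-t)^2 - (m*M) * S := by ring
          _ = m * ((k:ℝ)+1-t)^2 - S := by rw [hMm, one_mul]
      rw [h3] at h2
      refine le_trans ?_ h2
      rw [hS, ← ht2]
      nlinarith [mul_nonneg (mul_nonneg (sub_nonneg.mpr hA) (sub_nonneg.mpr hB))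
          (by linarith : (0:ℝ) ≤ m + 4*(k:ℝ) + 3),
        mul_nonneg (sub_nonneg.mpr hB)
          (mul_nonneg (by linarith : (0:ℝ) ≤ 2*(k:ℝ)+1) (sq_nonneg t)),
        mul_nonneg (sub_nonneg.mpr hA)
          (mul_nonneg (by linarith : (0:ℝ) ≤ 2*((k:ℝ)+1)) (sq_nonneg (t - 1/2)))]
  have hfin : (m^2-1)/12 ≤ V := le_of_mul_le_mul_left main hm0
  have : 1/M^2 = m^2 := by rw [hm]; rw [div_pow]; norm_num
  rw [this]
  exact hfin

/-- For any `ℤ`-valued random variable with finite variance,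
`M(X) ≥ 1/√(1 + 12 Var X)`. -/
theorem max_prob_ge {Ω : Type*} [MeasurableSpace Ω] (μ : Measure Ω)
    [IsProbabilityMeasure μ] (X : Ω → ℤ) (hX : Measurable X)
    (hvar : MemLp (fun ω => (X ω : ℝ)) 2 μ) :
    (⨆ x : ℤ, (μ {ω | X ω = x}).toReal) ≥
      1 / Real.sqrt (1 + 12 * variance (fun ω => (X ω : ℝ)) μ) := by
  set ν : Measure ℤ := μ.map X with hν
  have hνprob : IsProbabilityMeasure ν := Measure.isProbabilityMeasure_map hX.aemeasurable
  set p : ℤ → ℝ := fun x => (μ {ω | X ω = x}).toReal with hpdef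
  have hp_eq : ∀ x : ℤ, p x = (ν {x}).toReal := by
    intro x
    rw [hν, Measure.map_apply hX (MeasurableSet.singleton x)]
    rfl
  have hp0 : ∀ x, 0 ≤ p x := fun x => ENNReal.toReal_nonneg
  have hp1 : ∀ x, p x ≤ 1 := by
    intro x
    have h : μ {ω | X ω = x} ≤ 1 := prob_le_one
    have h2 := ENNReal.toReal_mono ENNReal.one_ne_top h
    simpa using h2
  -- HasSum p 1
  have htsum1 : ∑' x : ℤ, p x = 1 := by
    have hint : Integrable (fun _ : ℤ => (1:ℝ)) ν := integrable_const 1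
    have h := integral_countable' hint
    simp only [integral_const, measureReal_def, measure_univ, ENNReal.toReal_one, one_smul, smul_eq_mul,
      mul_one] at h
    exact (tsum_congr fun x => hp_eq x).trans h.symm
  have hpsummable : Summable p := by
    by_contra h
    rw [tsum_eq_zero_of_not_summable h] at htsum1
    norm_num at htsum1
  have hp : HasSum p 1 := htsum1 ▸ hpsummable.hasSum
  set M : ℝ := ⨆ x : ℤ, p x with hM
  have hbdd : BddAbove (Set.range p) := ⟨1, by rintro _ ⟨x, rfl⟩; exact hp1 x⟩
  have hpM : ∀ x, p x ≤ M := fun x => le_ciSup hbdd x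
  have hM1 : M ≤ 1 := ciSup_le hp1
  have hM0 : 0 < M := by
    by_contra h
    push_neg at h
    have hz : p = 0 := funext fun x => le_antisymm (le_trans (hpM x) h) (hp0 x)
    rw [hz] at hp
    exact one_ne_zero (hasSum_zero.unique hp).symm
  set a : ℝ := ∫ ω, (X ω : ℝ) ∂μ with ha
  set V : ℝ := variance (fun ω => (X ω : ℝ)) μ with hVdef
  have hV0 : 0 ≤ V := variance_nonneg _ _
  have hVeq : V = ∫ ω, ((X ω : ℝ) - a)^2 ∂μ := by
    rw [hVdef, variance_eq_integral hvar.aestronglyMeasurable.aemeasurable]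
  have hsq_int : Integrable (fun ω => ((X ω : ℝ) - a)^2) μ :=
    (hvar.sub (memLp_const a)).integrable_sq
  set c : ℤ := round a with hc
  set θ : ℝ := a - c with hθdef
  have hcθ : (c:ℝ) = a - θ := by rw [hθdef]; ring
  have hθhalf : |θ| ≤ 1/2 := by rw [hθdef, hc]; exact abs_sub_round a
  -- the bridge
  have hBridge : ∀ (k : ℕ) (T : ℝ), ((k:ℝ)+|θ|)^2 ≤ T → T ≤ ((k:ℝ)+1-|θ|)^2 →
      T - M * ((2*k+1)*T - ((2*k+1)*θ^2 + (k:ℝ)*(k+1)*(2*k+1)/3)) ≤ V := by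
    intro k T hT1 hT2
    have hT0 : 0 ≤ T := le_trans (sq_nonneg _) hT1
    set S : ℝ := (2*k+1)*T - ((2*k+1)*θ^2 + (k:ℝ)*(k+1)*(2*k+1)/3) with hSdef
    set F : ℤ → ℝ := fun x => max (T - ((x:ℝ)-a)^2) 0 with hFdef
    have hS : HasSum F S := bump_hasSum a θ T c k hcθ hθhalf hT1 hT2
    have hF0 : ∀ x, 0 ≤ F x := fun x => le_max_right _ _
    set g : ℤ → ℝ := fun x => min T (((x:ℝ)-a)^2) with hgdef
    have hg0 : ∀ x, 0 ≤ g x := fun x => le_min hT0 (sq_nonneg _)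
    have hgT : ∀ x, g x ≤ T := fun x => min_le_left _ _
    have hgF : ∀ x, g x = T - F x := by
      intro x
      rcases le_total T (((x:ℝ)-a)^2) with h | h
      · rw [hgdef]; simp only [hFdef]
        rw [min_eq_left h, max_eq_right (by linarith)]
        ring
      · rw [hgdef]; simp only [hFdef]
        rw [min_eq_right h, max_eq_left (by linarith)]
        ring
    have hgmeas : Measurable g := measurable_of_countable g
    have hgX_int : Integrable (fun ω => g (X ω)) μ := by
      refine Integrable.mono' (integrable_const T) ((hgmeas.comp hX).aestronglyMeasurable)
        (ae_of_all _ fun ω => ?_)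
      rw [Real.norm_eq_abs, abs_le]
      exact ⟨by linarith [hg0 (X ω)], hgT (X ω)⟩
    have hle : ∫ ω, g (X ω) ∂μ ≤ V := by
      rw [hVeq]
      exact integral_mono hgX_int hsq_int fun ω => min_le_right _ _
    have hgν_int : Integrable g ν := by
      rw [hν, integrable_map_measure hgmeas.aestronglyMeasurable hX.aemeasurable]
      exact hgX_int
    have hmap : ∫ ω, g (X ω) ∂μ = ∫ x, g x ∂ν := by
      rw [hν, integral_map hX.aemeasurable hgmeas.aestronglyMeasurable]
    have hcount : ∫ x, g x ∂ν = ∑' x, p x * g x := by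
      rw [integral_countable' hgν_int]
      exact tsum_congr fun x => by rw [hp_eq x, smul_eq_mul, measureReal_def]
    -- lower bound on the tsum
    have hsum_pT : Summable (fun x => p x * T) := hpsummable.mul_right T
    have hsum_lhs : Summable (fun x => p x * T - M * F x) :=
      hsum_pT.sub (hS.summable.mul_left M)
    have hsum_rhs : Summable (fun x => p x * g x) := by
      refine Summable.of_nonneg_of_le (fun x => mul_nonneg (hp0 x) (hg0 x))
        (fun x => mul_le_mul_of_nonneg_left (hgT x) (hp0 x)) hsum_pT
    have hpt : ∀ x, p x * T - M * F x ≤ p x * g x := by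
      intro x
      rw [hgF x]
      have : p x * F x ≤ M * F x := mul_le_mul_of_nonneg_right (hpM x) (hF0 x)
      calc p x * T - M * F x ≤ p x * T - p x * F x := by linarith
        _ = p x * (T - F x) := by ring
    have htsum_le : ∑' x, (p x * T - M * F x) ≤ ∑' x, p x * g x :=
      Summable.tsum_le_tsum hpt hsum_lhs hsum_rhs
    have hlhs_eq : ∑' x, (p x * T - M * F x) = T - M * S := by
      rw [Summable.tsum_sub hsum_pT (hS.summable.mul_left M)]
      rw [tsum_mul_right, htsum1, one_mul]
      rw [tsum_mul_left, hS.tsum_eq]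
    calc T - M * S = ∑' x, (p x * T - M * F x) := hlhs_eq.symm
      _ ≤ ∑' x, p x * g x := htsum_le
      _ = ∫ x, g x ∂ν := hcount.symm
      _ = ∫ ω, g (X ω) ∂μ := hmap.symm
      _ ≤ V := hle
  have hkey : (1/M^2 - 1)/12 ≤ V := key_numeric M V θ hM0 hM1 hθhalf hBridge
  -- final algebra
  rw [ge_iff_le]
  have h1 : 1/M^2 ≤ 1 + 12*V := by linarith
  have h2 : 1/M ≤ Real.sqrt (1 + 12*V) := by
    rw [Real.le_sqrt' (by positivity)]
    rw [div_pow, one_pow]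
    exact h1
  have h3 : (0:ℝ) < Real.sqrt (1 + 12*V) := Real.sqrt_pos.mpr (by linarith)
  have h4 : 1 / Real.sqrt (1 + 12*V) ≤ 1/(1/M) := by
    exact one_div_le_one_div_of_le (by positivity) h2
  rw [one_div_one_div] at h4
  exact h4
end

section
/- For any nonzero reals a_1,…,a_n there exists a ℚ-linear map T : ℝ → ℚ such that T(a_i) is a nonzero integer for every i. -/
/-- For nonzero reals `a 1, …, a n` there is a `ℚ`-linear map `T : ℝ → ℚ` with
`T (a i)` a nonzero integer for every `i`. -/
theorem exists_rat_linear_map_to_nonzero_int (n : ℕ) (a : Fin n → ℝ)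
    (ha : ∀ i, a i ≠ 0) :
    ∃ T : ℝ →ₗ[ℚ] ℚ, ∀ i, ∃ m : ℤ, m ≠ 0 ∧ T (a i) = (m : ℚ) := by
  -- The dual space
  set D := Module.Dual ℚ ℝ
  -- Kernel hyperplanes
  let K : Fin n → Subspace ℚ D := fun i =>
    LinearMap.ker ((LinearMap.applyₗ (R := ℚ) (a i)))
  have hK : ∀ i, K i ≠ ⊤ := by
    intro i h
    have : ∀ φ : D, φ (a i) = 0 := by
      intro φ
      have : φ ∈ K i := h ▸ Submodule.mem_top
      exact this
    exact ha i ((Module.forall_dual_apply_eq_zero_iff ℚ (a i)).mp this)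
  -- The union of the kernels is not everything
  have hcover : (⋃ i, ((K i : Set D))) ≠ Set.univ := by
    intro h
    obtain ⟨i, hi⟩ := Subspace.exists_eq_top_of_iUnion_eq_univ h
    exact hK i hi
  obtain ⟨f, hf⟩ : ∃ f : D, ∀ i, f (a i) ≠ 0 := by
    rw [Set.ne_univ_iff_exists_notMem] at hcover
    obtain ⟨f, hf⟩ := hcover
    refine ⟨f, fun i hi => hf ?_⟩
    exact Set.mem_iUnion.mpr ⟨i, by exact hi⟩
  -- clear denominators
  set q : Fin n → ℚ := fun i => f (a i) with hq
  set d : ℤ := ∏ i, ((q i).den : ℤ) with hd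
  have hdpos : 0 < d := Finset.prod_pos fun i _ => Int.natCast_pos.mpr (q i).pos
  refine ⟨(d : ℚ) • f, fun i => ?_⟩
  have hdvd : ((q i).den : ℤ) ∣ d := Finset.dvd_prod_of_mem _ (Finset.mem_univ i)
  obtain ⟨c, hc⟩ := hdvd
  have hc0 : c ≠ 0 := by
    rintro rfl
    simp at hc
    omega
  refine ⟨(q i).num * c, mul_ne_zero (Rat.num_ne_zero.mpr (hf i)) hc0, ?_⟩
  have hden : ((q i).den : ℚ) * q i = (q i).num := by
    rw [mul_comm]
    exact_mod_cast Rat.mul_den_eq_num (q i)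
  have : ((d : ℚ)) * q i = ((q i).num * c : ℤ) := by
    rw [hc]
    push_cast
    rw [mul_comm ((q i).den : ℚ) (c : ℚ), mul_assoc, hden]
    ring
  exact this
end
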